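/- For every integer k ≥ 0, the real vector space {(P₁, P₂, P₃) ∈ 𝒫_{k−1}³ : x P₁ + y P₂ + z P₃ = 0} has dimension (2k³ + 3k² − 5k)/6. -/

import Mathlib

open MvPolynomial

noncomputable section

/-- Real polynomials in the three variables `x, y, z` (indexed `0, 1, 2`). -/
abbrev P3 := MvPolynomial (Fin 3) ℝ

/-- The space `𝒫_m` of polynomials of total degree at most `m`, with the convention
`𝒫_m = {0}` for `m < 0`. -/
def polyLE3 (m : ℤ) : Submodule ℝ P3 :=
  if 0 ≤ m then restrictTotalDegree (Fin 3) ℝ m.toNat else ⊥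

/-- The space `{(P₁,P₂,P₃) ∈ 𝒫_{k-1}³ : x P₁ + y P₂ + z P₃ = 0}`. -/
def traceFreeTriples (k : ℕ) : Submodule ℝ (Fin 3 → P3) where
  carrier := {P | (∀ i, P i ∈ polyLE3 ((k : ℤ) - 1)) ∧
    X 0 * P 0 + X 1 * P 1 + X 2 * P 2 = 0}
  add_mem' := by
    rintro P Q ⟨hP, hP0⟩ ⟨hQ, hQ0⟩
    refine ⟨fun i => Submodule.add_mem _ (hP i) (hQ i), ?_⟩
    simp only [Pi.add_apply]
    linear_combination hP0 + hQ0
  zero_mem' := ⟨fun i => Submodule.zero_mem _, by simp⟩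
  smul_mem' := by
    rintro c P ⟨hP, hP0⟩
    refine ⟨fun i => Submodule.smul_mem _ c (hP i), ?_⟩
    simp only [Pi.smul_apply, smul_eq_C_mul]
    linear_combination (C c : P3) * hP0


lemma dsum_eq {n : ℕ} (s : Fin n →₀ ℕ) : (s.sum fun _ e => e) = ∑ i, s i :=
  Finsupp.sum_fintype _ _ (fun _ => rfl)

lemma dsum_eq' {n : ℕ} (s : Fin n →₀ ℕ) : (s.sum fun _ => id) = ∑ i, s i :=
  Finsupp.sum_fintype _ _ (fun _ => rfl)

lemma sum_cons' {n : ℕ} (y : ℕ) (s : Fin n →₀ ℕ) :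
    ∑ i, (Finsupp.cons y s) i = y + ∑ i, s i := by
  rw [Fin.sum_univ_succ]
  simp [Finsupp.cons_succ]

def eSym (N : ℕ) : {s : Fin 3 →₀ ℕ // (s.sum fun _ e => e) ≤ N} ≃ Sym (Fin 4) N := by
  refine Equiv.trans ?_ (Sym.equivNatSum (Fin 4) N).symm
  refine ⟨fun s => ⟨Finsupp.cons (N - ∑ i, (s : Fin 3 →₀ ℕ) i) s, ?_⟩,
    fun g => ⟨Finsupp.tail g.1, ?_⟩, ?_, ?_⟩
  · have hs := s.2
    rw [dsum_eq] at hs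
    rw [dsum_eq', sum_cons']
    omega
  · have hg := g.2
    rw [dsum_eq'] at hg
    rw [dsum_eq]
    have h4 : ∑ i, g.1 i = N := hg
    rw [Fin.sum_univ_succ] at h4
    simp only [Finsupp.tail_apply]
    omega
  · intro s
    exact Subtype.ext (Finsupp.tail_cons _ _)
  · intro g
    have hg := g.2
    rw [dsum_eq', Fin.sum_univ_succ] at hg
    refine Subtype.ext ?_
    show Finsupp.cons (N - ∑ i, Finsupp.tail g.1 i) (Finsupp.tail g.1) = g.1
    have h0 : N - ∑ i, Finsupp.tail g.1 i = g.1 0 := by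
      simp only [Finsupp.tail_apply]
      omega
    rw [h0, Finsupp.cons_tail]

lemma card_sumLE (N : ℕ) :
    Nat.card {s : Fin 3 →₀ ℕ | (s.sum fun _ e => e) ≤ N} = (N + 3).choose 3 := by
  rw [show Nat.card {s : Fin 3 →₀ ℕ | (s.sum fun _ e => e) ≤ N}
      = Nat.card {s : Fin 3 →₀ ℕ // (s.sum fun _ e => e) ≤ N} from rfl]
  rw [Nat.card_congr (eSym N), Nat.card_eq_fintype_card, Sym.card_sym_eq_choose]
  have h : Fintype.card (Fin 4) + N - 1 = N + 3 := by simp; omega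
  rw [h, ← Nat.choose_symm (Nat.le_add_right N 3)]
  congr 1
  omega

instance finite_sumLE (N : ℕ) : Finite {s : Fin 3 →₀ ℕ | (s.sum fun _ e => e) ≤ N} :=
  Finite.of_equiv _ (eSym N).symm



lemma finrank_restrictSupport (s : Set (Fin 3 →₀ ℕ)) [Finite s] :
    Module.finrank ℝ (restrictSupport ℝ s) = Nat.card s := by
  have := Fintype.ofFinite s
  rw [Module.finrank_eq_card_basis (basisRestrictSupport ℝ s), Nat.card_eq_fintype_card]

lemma finrank_rtd (N : ℕ) :
    Module.finrank ℝ (restrictTotalDegree (Fin 3) ℝ N) = (N + 3).choose 3 := by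
  rw [restrictTotalDegree, finrank_restrictSupport, ← card_sumLE N]

def Wset (k : ℕ) : Set (Fin 3 →₀ ℕ) := {s | (s.sum fun _ e => e) ≤ k ∧ s ≠ 0}

instance (k : ℕ) : Finite (Wset k) := by
  have h := Set.finite_coe_iff.mp (finite_sumLE k)
  rw [Set.finite_coe_iff]
  exact h.subset fun s hs => hs.1

lemma card_Wset (k : ℕ) : Nat.card (Wset k) = (k + 3).choose 3 - 1 := by
  have hW : Wset k = {s : Fin 3 →₀ ℕ | (s.sum fun _ e => e) ≤ k} \ {0} := by
    ext s; simp [Wset, and_comm]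
  have hfin : ({s : Fin 3 →₀ ℕ | (s.sum fun _ e => e) ≤ k}).Finite := by
    exact Set.finite_coe_iff.mp (finite_sumLE _)
  have h0 : (0 : Fin 3 →₀ ℕ) ∈ {s : Fin 3 →₀ ℕ | (s.sum fun _ e => e) ≤ k} := by
    simp
  rw [hW, Nat.card_coe_set_eq, Set.ncard_diff_singleton_of_mem h0,
    ← Nat.card_coe_set_eq, card_sumLE]

lemma two_mul_choose2 (j : ℕ) : (j + 2).choose 2 * 2 = (j + 1) * (j + 2) := by
  induction j with
  | zero => rfl
  | succ j ih =>
    rw [show j + 1 + 2 = (j + 2) + 1 from rfl, Nat.choose_succ_succ, Nat.choose_one_right]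
    nlinarith [ih]

lemma six_mul_choose3 (n : ℕ) : (n + 3).choose 3 * 6 = (n + 1) * (n + 2) * (n + 3) := by
  induction n with
  | zero => rfl
  | succ n ih =>
    rw [show n + 1 + 3 = (n + 3) + 1 from rfl, Nat.choose_succ_succ]
    have h2 := two_mul_choose2 (n + 1)
    nlinarith [ih, h2]

lemma choose3_cast (n : ℕ) :
    (((n + 3).choose 3 : ℕ) : ℚ) = (n + 1) * (n + 2) * (n + 3) / 6 := by
  have := six_mul_choose3 n
  field_simp
  exact_mod_cast congrArg (Nat.cast (R := ℚ)) this


def W (k : ℕ) : Submodule ℝ P3 := restrictSupport ℝ (Wset k)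

def Phi : (Fin 3 → P3) →ₗ[ℝ] P3 where
  toFun P := X 0 * P 0 + X 1 * P 1 + X 2 * P 2
  map_add' P Q := by simp only [Pi.add_apply]; ring
  map_smul' c P := by
    simp only [Pi.smul_apply, smul_eq_C_mul, RingHom.id_apply]
    ring

@[simp] lemma Phi_apply (P : Fin 3 → P3) : Phi P = X 0 * P 0 + X 1 * P 1 + X 2 * P 2 := rfl

lemma polyLE3_succ (m : ℕ) :
    polyLE3 (((m + 1 : ℕ) : ℤ) - 1) = restrictTotalDegree (Fin 3) ℝ m := by
  have h : ((m + 1 : ℕ) : ℤ) - 1 = (m : ℤ) := by push_cast; ring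
  rw [h, polyLE3, if_pos (by positivity)]
  simp

def Vm (m : ℕ) : Submodule ℝ (Fin 3 → P3) :=
  Submodule.pi Set.univ (fun _ => restrictTotalDegree (Fin 3) ℝ m)

def eV (m : ℕ) : (Vm m) ≃ₗ[ℝ] (Fin 3 → restrictTotalDegree (Fin 3) ℝ m) where
  toFun x i := ⟨x.1 i, x.2 i trivial⟩
  map_add' x y := rfl
  map_smul' c x := rfl
  invFun f := ⟨fun i => f i, fun i _ => (f i).2⟩
  left_inv x := rfl
  right_inv f := rfl

instance (m : ℕ) : FiniteDimensional ℝ (Vm m) := Module.Finite.equiv (eV m).symm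

lemma mem_rtd {m : ℕ} {p : P3} :
    p ∈ restrictTotalDegree (Fin 3) ℝ m ↔ p.totalDegree ≤ m := by
  rw [mem_restrictTotalDegree]

set_option synthInstance.maxHeartbeats 1000000 in
lemma finrank_Vm (m : ℕ) :
    Module.finrank ℝ (Vm m) = 3 * Module.finrank ℝ (restrictTotalDegree (Fin 3) ℝ m) := by
  rw [LinearEquiv.finrank_eq (eV m), Module.finrank_pi_fintype]
  simp [Finset.sum_const]

lemma mem_W_of {k : ℕ} {q : P3} (hdeg : q ∈ restrictTotalDegree (Fin 3) ℝ k)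
    (h0 : coeff 0 q = 0) : q ∈ W k := by
  rw [W, restrictSupport, AddMonoidAlgebra.mem_supported]
  intro s hs
  refine ⟨hdeg hs, ?_⟩
  rintro rfl
  exact (MvPolynomial.mem_support_iff.mp hs) h0

lemma map_le_W (m : ℕ) : Submodule.map Phi (Vm m) ≤ W (m + 1) := by
  rintro q ⟨P, hP, rfl⟩
  have hdeg : ∀ i : Fin 3, (X i * P i).totalDegree ≤ m + 1 := by
    intro i
    calc (X i * P i).totalDegree ≤ (X (R := ℝ) i).totalDegree + (P i).totalDegree :=
          totalDegree_mul _ _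
      _ ≤ 1 + m := by
          have := mem_rtd.mp (hP i trivial)
          rw [totalDegree_X]
          omega
      _ = m + 1 := by omega
  refine mem_W_of ?_ ?_
  · rw [Phi_apply]
    refine Submodule.add_mem _ (Submodule.add_mem _ ?_ ?_) ?_ <;>
      exact mem_rtd.mpr (hdeg _)
  · have : constantCoeff (Phi P) = 0 := by
      simp [map_add, map_mul, constantCoeff_X]
    simpa [constantCoeff_eq] using this

lemma W_le_map (m : ℕ) : W (m + 1) ≤ Submodule.map Phi (Vm m) := by
  rw [W, restrictSupport, AddMonoidAlgebra.supported_eq_span_single]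
  refine Submodule.span_le.mpr ?_
  rintro _ ⟨s, ⟨hsle, hs0⟩, rfl⟩
  obtain ⟨i, hi⟩ : ∃ i, s i ≠ 0 := by
    by_contra h
    push_neg at h
    exact hs0 (Finsupp.ext h)
  set t := s - Finsupp.single i 1 with ht
  have hts : t + Finsupp.single i 1 = s := by
    ext j
    rcases eq_or_ne j i with rfl | hj
    · simp [ht, Finsupp.single_apply]
      omega
    · simp [ht, Finsupp.single_apply, hj, Ne.symm hj]
  have hsum : (∑ j, t j) + 1 = ∑ j, s j := by
    have := congrArg (fun f : Fin 3 →₀ ℕ => ∑ j, f j) hts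
    simpa [Finsupp.add_apply, Finset.sum_add_distrib, Finsupp.single_apply] using this
  have hsle' : ∑ j, s j ≤ m + 1 := by rwa [dsum_eq] at hsle
  set P : Fin 3 → P3 := Pi.single i (monomial t (1 : ℝ)) with hPdef
  refine ⟨P, ?_, ?_⟩
  · intro j _
    rcases eq_or_ne j i with rfl | hj
    · rw [hPdef, Pi.single_eq_same]
      refine mem_rtd.mpr ?_
      rw [totalDegree_monomial _ (one_ne_zero), dsum_eq]
      omega
    · rw [hPdef, Pi.single_eq_of_ne hj]
      exact Submodule.zero_mem _
  · show Phi P = AddMonoidAlgebra.single s 1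
    have hmon : X (R := ℝ) i * monomial t 1 = AddMonoidAlgebra.single s 1 := by
      rw [single_eq_monomial, X, monomial_mul, one_mul, add_comm, hts]
    have h3 : ∀ j : Fin 3, X (R := ℝ) j * P j
        = if j = i then X (R := ℝ) i * monomial t 1 else 0 := by
      intro j
      rcases eq_or_ne j i with rfl | hj
      · simp [hPdef]
      · simp [hPdef, Pi.single_eq_of_ne hj, hj]
    rw [Phi_apply, h3 0, h3 1, h3 2, ← hmon]
    fin_cases i <;> simp [Fin.ext_iff]

lemma mem_traceFreeTriples {k : ℕ} {P : Fin 3 → P3} :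
    P ∈ traceFreeTriples k ↔ (∀ i, P i ∈ polyLE3 ((k : ℤ) - 1)) ∧
      X 0 * P 0 + X 1 * P 1 + X 2 * P 2 = 0 := Iff.rfl

lemma traceFree_eq (m : ℕ) :
    traceFreeTriples (m + 1)
      = Submodule.map (Vm m).subtype (LinearMap.ker (Phi.domRestrict (Vm m))) := by
  ext P
  rw [mem_traceFreeTriples]
  constructor
  · rintro ⟨h1, h2⟩
    refine ⟨⟨P, fun i _ => ?_⟩, ?_, rfl⟩
    · have := h1 i
      rwa [polyLE3_succ] at this
    · simp only [SetLike.mem_coe, LinearMap.mem_ker, LinearMap.domRestrict_apply, Phi_apply]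
      exact h2
  · rintro ⟨⟨Q, hQ⟩, hker, rfl⟩
    simp only [SetLike.mem_coe, LinearMap.mem_ker, LinearMap.domRestrict_apply,
      Phi_apply] at hker
    exact ⟨fun i => by rw [polyLE3_succ]; exact hQ i trivial, hker⟩


lemma finrank_W (k : ℕ) : Module.finrank ℝ (W k) = (k + 3).choose 3 - 1 := by
  rw [W, finrank_restrictSupport, card_Wset]

/-- The dimension of `{(P₁,P₂,P₃) ∈ 𝒫_{k-1}³ : x P₁ + y P₂ + z P₃ = 0}` is
`(2k³ + 3k² - 5k)/6`. -/
theorem dim_traceFreeTriples (k : ℕ) :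
    (Module.finrank ℝ (traceFreeTriples k) : ℚ) =
      (2 * (k : ℚ) ^ 3 + 3 * (k : ℚ) ^ 2 - 5 * (k : ℚ)) / 6 := by
  rcases k with _ | m
  · have hbot : traceFreeTriples 0 = ⊥ := by
      rw [eq_bot_iff]
      rintro P ⟨h1, -⟩
      have hP : ∀ i, P i = 0 := by
        intro i
        have := h1 i
        simpa [polyLE3] using this
      simpa [Submodule.mem_bot] using (funext hP : P = 0)
    rw [hbot, finrank_bot]
    norm_num
  · have h1 : Module.finrank ℝ (traceFreeTriples (m + 1))
        = Module.finrank ℝ (LinearMap.ker (Phi.domRestrict (Vm m))) := by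
      rw [traceFree_eq m]
      exact (LinearEquiv.finrank_eq (Submodule.equivSubtypeMap (Vm m) _)).symm
    have h3 : LinearMap.range (Phi.domRestrict (Vm m)) = W (m + 1) := by
      rw [LinearMap.range_domRestrict]
      exact le_antisymm (map_le_W m) (W_le_map m)
    have h2 := LinearMap.finrank_range_add_finrank_ker (Phi.domRestrict (Vm m))
    rw [h3, finrank_W, finrank_Vm, finrank_rtd] at h2
    have hge1 : 1 ≤ (m + 1 + 3).choose 3 := Nat.choose_pos (by omega)
    have hker : (Module.finrank ℝ (LinearMap.ker (Phi.domRestrict (Vm m))) : ℚ)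
        = 3 * (((m + 3).choose 3 : ℕ) : ℚ) - ((((m + 1 + 3).choose 3 : ℕ) : ℚ) - 1) := by
      have := congrArg (fun n : ℕ => (n : ℚ)) h2
      push_cast [Nat.cast_sub hge1] at this
      linarith
    rw [h1, hker, choose3_cast m, show m + 1 + 3 = (m + 1) + 3 from rfl, choose3_cast (m + 1)]
    push_cast
    field_simp
    ring
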